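/- A nonzero vector w ∈ T is a product vector if and only if either w = c · v_λ for some nonzero c ∈ ℂ and some λ ∈ ℂ, where v_λ ∈ H has coordinates v_λ(i) = λ^{∑_{r=1}^k i_r}, or w = c · e_{i*} for some nonzero c ∈ ℂ, where i* ∈ I is the tuple with i*_r = d_r − 1 for every r. -/

import Mathlib

section aux
variable {k : ℕ} {d : Fin k → ℕ}

lemma aux_update_sum (i : ∀ r, Fin (d r)) (r : Fin k) (v : Fin (d r)) :
    (∑ s, ((Function.update i r v s : ℕ))) + (i r : ℕ)
      = (∑ s, ((i s : ℕ))) + (v : ℕ) := by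
  have h1 : (∑ s, ((Function.update i r v s : ℕ)))
      = (v : ℕ) + ∑ s ∈ Finset.univ.erase r, ((i s : ℕ)) := by
    rw [← Finset.add_sum_erase Finset.univ _ (Finset.mem_univ r)]
    congr 1
    · rw [Function.update_self]
    · exact Finset.sum_congr rfl fun s hs => by
        rw [Function.update_of_ne (Finset.ne_of_mem_erase hs)]
  have h2 : (∑ s, ((i s : ℕ)))
      = (i r : ℕ) + ∑ s ∈ Finset.univ.erase r, ((i s : ℕ)) :=
    (Finset.add_sum_erase Finset.univ _ (Finset.mem_univ r)).symm
  rw [h1, h2]; ring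

lemma aux_update_prod (x : ∀ r, Fin (d r) → ℂ) (i : ∀ r, Fin (d r)) (r : Fin k) (v : Fin (d r)) :
    (∏ s, x s (Function.update i r v s)) * x r (i r)
      = (∏ s, x s (i s)) * x r v := by
  have h1 : (∏ s, x s (Function.update i r v s))
      = x r v * ∏ s ∈ Finset.univ.erase r, x s (i s) := by
    rw [← Finset.mul_prod_erase Finset.univ _ (Finset.mem_univ r)]
    congr 1
    · rw [Function.update_self]
    · exact Finset.prod_congr rfl fun s hs => by
        rw [Function.update_of_ne (Finset.ne_of_mem_erase hs)]
  have h2 : (∏ s, x s (i s))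
      = x r (i r) * ∏ s ∈ Finset.univ.erase r, x s (i s) :=
    (Finset.mul_prod_erase Finset.univ _ (Finset.mem_univ r)).symm
  rw [h1, h2]; ring

lemma aux_exists_decomp (hd : ∀ r, 1 ≤ d r) :
    ∀ n, n ≤ ∑ r, (d r - 1) → ∃ i : ∀ r, Fin (d r), (∑ r, ((i r : ℕ))) = n := by
  intro n
  induction n with
  | zero => exact fun _ => ⟨fun r => ⟨0, hd r⟩, by simp⟩
  | succ n ih =>
    intro hn
    obtain ⟨i, hi⟩ := ih (Nat.le_of_succ_le hn)
    have hex : ∃ r, (i r : ℕ) < d r - 1 := by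
      by_contra h
      push_neg at h
      have h2 : (∑ r, (d r - 1)) ≤ ∑ r, ((i r : ℕ)) := Finset.sum_le_sum fun r _ => h r
      omega
    obtain ⟨r, hr⟩ := hex
    have hv : (i r : ℕ) + 1 < d r := by have := (i r).isLt; omega
    refine ⟨Function.update i r ⟨(i r : ℕ) + 1, hv⟩, ?_⟩
    have h3 := aux_update_sum i r ⟨(i r : ℕ) + 1, hv⟩
    have h4 : ((⟨(i r : ℕ) + 1, hv⟩ : Fin (d r)) : ℕ) = (i r : ℕ) + 1 := rfl
    omega

lemma aux_good_decomp (hk : 2 ≤ k) (hd : ∀ r, 2 ≤ d r) (n : ℕ) (h1 : 1 ≤ n)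
    (h2 : n + 1 ≤ ∑ r, (d r - 1)) :
    ∃ i : ∀ r, Fin (d r), (∑ r, ((i r : ℕ))) = n ∧
      ∃ r r', r ≠ r' ∧ (i r : ℕ) + 1 < d r ∧ 1 ≤ (i r' : ℕ) := by
  have : Nontrivial (Fin k) := ⟨⟨0, by omega⟩, ⟨1, by omega⟩, by simp [Fin.ext_iff]⟩
  obtain ⟨i, hi⟩ := aux_exists_decomp (fun r => le_trans one_le_two (hd r)) n (by omega)
  refine ⟨i, hi, ?_⟩
  by_contra h
  push_neg at h
  have hr0 : ∃ r, (i r : ℕ) + 1 < d r := by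
    by_contra hc
    push_neg at hc
    have : (∑ r, (d r - 1)) ≤ ∑ r, ((i r : ℕ)) :=
      Finset.sum_le_sum fun r _ => by have := hc r; omega
    omega
  obtain ⟨r0, hr0⟩ := hr0
  have hall0 : ∀ s, s ≠ r0 → (i s : ℕ) = 0 := fun s hs => by
    have := h r0 s (Ne.symm hs) hr0; omega
  have hir0 : 1 ≤ (i r0 : ℕ) := by
    by_contra hc
    have hz : (∑ s, ((i s : ℕ))) = 0 := Finset.sum_eq_zero fun s _ => by
      by_cases hs : s = r0
      · subst hs; omega
      · exact hall0 s hs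
    omega
  obtain ⟨s, hs⟩ := exists_ne r0
  have h1s : (i s : ℕ) = 0 := hall0 s hs
  have h2s : (i s : ℕ) + 1 < d s := by have := hd s; omega
  have := h s r0 hs h2s
  omega

lemma aux_step (hk : 2 ≤ k) (hd : ∀ r, 2 ≤ d r)
    (x : ∀ r, Fin (d r) → ℂ) (a : ℕ → ℂ)
    (hax : ∀ i : ∀ r, Fin (d r), a (∑ r, ((i r : ℕ))) = ∏ r, x r (i r))
    (n : ℕ) (h1 : 1 ≤ n) (h2 : n + 1 ≤ ∑ r, (d r - 1)) (han : a n ≠ 0) :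
    a (n + 1) ≠ 0 ∧ a (n - 1) ≠ 0 := by
  obtain ⟨i, hiS, r, r', hrr', hlt, hge⟩ := aux_good_decomp hk hd n h1 h2
  set vp : Fin (d r) := ⟨(i r : ℕ) + 1, hlt⟩ with hvp
  have hvm' : (i r' : ℕ) - 1 < d r' := Nat.lt_of_le_of_lt (Nat.sub_le _ _) (i r').isLt
  set vm : Fin (d r') := ⟨(i r' : ℕ) - 1, hvm'⟩ with hvm
  have hvpv : (vp : ℕ) = (i r : ℕ) + 1 := rfl
  have hvmv : (vm : ℕ) = (i r' : ℕ) - 1 := rfl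
  -- sums
  have hSip : (∑ s, ((Function.update i r vp s : ℕ))) = n + 1 := by
    have := aux_update_sum i r vp; omega
  have hSim : (∑ s, ((Function.update i r' vm s : ℕ))) = n - 1 := by
    have := aux_update_sum i r' vm; omega
  have hipr' : ((Function.update i r vp) r' : ℕ) = (i r' : ℕ) := by
    rw [Function.update_of_ne (Ne.symm hrr')]
  have hSix : (∑ s, ((Function.update (Function.update i r vp) r' vm s : ℕ))) = n := by
    have := aux_update_sum (Function.update i r vp) r' vm
    omega
  -- nonzero products
  have han' : (∏ s, x s (i s)) ≠ 0 := by rw [← hax i, hiS]; exact han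
  have hanx : (∏ s, x s (Function.update (Function.update i r vp) r' vm s)) ≠ 0 := by
    rw [← hax _, hSix]; exact han
  have hfac := Finset.prod_ne_zero_iff.mp han'
  have hfacx := Finset.prod_ne_zero_iff.mp hanx
  have hxr : x r vp ≠ 0 := by
    have h := hfacx r (Finset.mem_univ r)
    rwa [Function.update_of_ne hrr', Function.update_self] at h
  have hxm : x r' vm ≠ 0 := by
    have h := hfacx r' (Finset.mem_univ r')
    rwa [Function.update_self] at h
  constructor
  · intro hz
    have hzz : (∏ s, x s (Function.update i r vp s)) = 0 := by
      rw [← hax _, hSip]; exact hz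
    obtain ⟨s, _, hs0⟩ := Finset.prod_eq_zero_iff.mp hzz
    by_cases hsr : s = r
    · subst hsr; rw [Function.update_self] at hs0; exact hxr hs0
    · rw [Function.update_of_ne hsr] at hs0
      exact hfac s (Finset.mem_univ s) hs0
  · intro hz
    have hzz : (∏ s, x s (Function.update i r' vm s)) = 0 := by
      rw [← hax _, hSim]; exact hz
    obtain ⟨s, _, hs0⟩ := Finset.prod_eq_zero_iff.mp hzz
    by_cases hsr : s = r'
    · subst hsr; rw [Function.update_self] at hs0; exact hxm hs0
    · rw [Function.update_of_ne hsr] at hs0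
      exact hfac s (Finset.mem_univ s) hs0

lemma aux_geo (hk : 2 ≤ k) (hd : ∀ r, 2 ≤ d r)
    (x : ∀ r, Fin (d r) → ℂ) (a : ℕ → ℂ)
    (hax : ∀ i : ∀ r, Fin (d r), a (∑ r, ((i r : ℕ))) = ∏ r, x r (i r))
    (n : ℕ) (h2 : n + 2 ≤ ∑ r, (d r - 1)) (hmidne : a (n + 1) ≠ 0) :
    a (n + 2) * a n = a (n + 1) * a (n + 1) := by
  obtain ⟨i, hiS, r, r', hrr', hlt, hge⟩ := aux_good_decomp hk hd (n + 1) (by omega) (by omega)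
  set vp : Fin (d r) := ⟨(i r : ℕ) + 1, hlt⟩ with hvp
  have hvm' : (i r' : ℕ) - 1 < d r' := Nat.lt_of_le_of_lt (Nat.sub_le _ _) (i r').isLt
  set vm : Fin (d r') := ⟨(i r' : ℕ) - 1, hvm'⟩ with hvm
  have hvpv : (vp : ℕ) = (i r : ℕ) + 1 := rfl
  have hvmv : (vm : ℕ) = (i r' : ℕ) - 1 := rfl
  have hSip : (∑ s, ((Function.update i r vp s : ℕ))) = n + 2 := by
    have := aux_update_sum i r vp; omega
  have hSim : (∑ s, ((Function.update i r' vm s : ℕ))) = n := by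
    have := aux_update_sum i r' vm; omega
  have himr : ((Function.update i r' vm) r : ℕ) = (i r : ℕ) := by
    rw [Function.update_of_ne hrr']
  have hSix : (∑ s, ((Function.update (Function.update i r' vm) r vp s : ℕ))) = n + 1 := by
    have := aux_update_sum (Function.update i r' vm) r vp
    omega
  have han1 : (∏ s, x s (i s)) ≠ 0 := by rw [← hax i, hiS]; exact hmidne
  have hxir : x r (i r) ≠ 0 := Finset.prod_ne_zero_iff.mp han1 r (Finset.mem_univ r)
  have h1 := aux_update_prod x i r vp
  have h2' := aux_update_prod x (Function.update i r' vm) r vp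
  rw [show (Function.update i r' vm) r = i r from Function.update_of_ne hrr' _ _] at h2'
  -- translate products to a-values
  have e1 : (∏ s, x s (Function.update i r vp s)) = a (n + 2) := by rw [← hax _, hSip]
  have e2 : (∏ s, x s (Function.update i r' vm s)) = a n := by rw [← hax _, hSim]
  have e3 : (∏ s, x s (i s)) = a (n + 1) := by rw [← hax _, hiS]
  have e4 : (∏ s, x s (Function.update (Function.update i r' vm) r vp s)) = a (n + 1) := by
    rw [← hax _, hSix]
  rw [e1, e3] at h1
  rw [e4, e2] at h2'
  -- h1 : a (n+2) * x r (i r) = a (n+1) * x r vp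
  -- h2' : a (n+1) * x r (i r) = a n * x r vp
  apply mul_right_cancel₀ hxir
  calc a (n + 2) * a n * x r (i r) = (a (n+2) * x r (i r)) * a n := by ring
    _ = (a (n+1) * x r vp) * a n := by rw [h1]
    _ = a (n+1) * (a n * x r vp) := by ring
    _ = a (n+1) * (a (n+1) * x r (i r)) := by rw [← h2']
    _ = a (n + 1) * a (n + 1) * x r (i r) := by ring

lemma aux_end (hk : 2 ≤ k) (hd : ∀ r, 2 ≤ d r)
    (x : ∀ r, Fin (d r) → ℂ) (a : ℕ → ℂ)
    (hax : ∀ i : ∀ r, Fin (d r), a (∑ r, ((i r : ℕ))) = ∏ r, x r (i r))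
    (r0 : Fin k)
    (h0 : a 0 ≠ 0) (hN : a (∑ r, (d r - 1)) ≠ 0) : a (d r0 - 1) ≠ 0 := by
  set z : ∀ r, Fin (d r) := fun r => ⟨0, by have := hd r; omega⟩ with hz
  set imax : ∀ r, Fin (d r) := fun r => ⟨d r - 1, by have := hd r; omega⟩ with himax
  set vmax : Fin (d r0) := ⟨d r0 - 1, by have := hd r0; omega⟩ with hvmax
  have hSz : (∑ s, ((z s : ℕ))) = 0 := by simp [hz]
  have hSmax : (∑ s, ((imax s : ℕ))) = ∑ r, (d r - 1) := rfl
  have hSi1 : (∑ s, ((Function.update z r0 vmax s : ℕ))) = d r0 - 1 := by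
    have := aux_update_sum z r0 vmax
    have hzv : (z r0 : ℕ) = 0 := rfl
    have hvv : (vmax : ℕ) = d r0 - 1 := rfl
    omega
  have hz0 : (∏ s, x s (z s)) ≠ 0 := by rw [← hax z, hSz]; exact h0
  have hzN : (∏ s, x s (imax s)) ≠ 0 := by rw [← hax imax, hSmax]; exact hN
  have hfz := Finset.prod_ne_zero_iff.mp hz0
  have hfN := Finset.prod_ne_zero_iff.mp hzN
  have hprod1 : (∏ s, x s (Function.update z r0 vmax s)) ≠ 0 := by
    rw [Finset.prod_ne_zero_iff]
    intro s _
    by_cases hs : s = r0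
    · subst hs; rw [Function.update_self]
      exact hfN s (Finset.mem_univ s)
    · rw [Function.update_of_ne hs]; exact hfz s (Finset.mem_univ s)
  rw [← hSi1, hax _]
  exact hprod1

end aux

theorem stmt_16 (k : ℕ) (hk : 2 ≤ k) (d : Fin k → ℕ) (hd : ∀ r, 2 ≤ d r)
    (u : ℕ → EuclideanSpace ℂ (∀ r, Fin (d r)))
    (hu : ∀ n, u n = ∑ i ∈ Finset.univ.filter
        (fun i : ∀ r, Fin (d r) => ∑ r, (i r : ℕ) = n),
      EuclideanSpace.single i (1 : ℂ))
    (v : ℂ → EuclideanSpace ℂ (∀ r, Fin (d r)))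
    (hv : ∀ lam : ℂ, v lam = ∑ i : ∀ r, Fin (d r),
      lam ^ (∑ r, (i r : ℕ)) • EuclideanSpace.single i (1 : ℂ))
    (istar : ∀ r, Fin (d r))
    (histar : ∀ r, (istar r : ℕ) = d r - 1)
    (w : EuclideanSpace ℂ (∀ r, Fin (d r)))
    (hwT : w ∈ Submodule.span ℂ (u '' Set.Iic (∑ r, (d r - 1))))
    (hw0 : w ≠ 0) :
    (∃ x : ∀ r, Fin (d r) → ℂ, ∀ i : ∀ r, Fin (d r), w i = ∏ r, x r (i r)) ↔
      ((∃ c : ℂ, c ≠ 0 ∧ ∃ lam : ℂ, w = c • v lam) ∨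
       (∃ c : ℂ, c ≠ 0 ∧ w = c • EuclideanSpace.single istar (1 : ℂ))) := by
  classical
  have hd1 : ∀ r, 1 ≤ d r := fun r => le_trans one_le_two (hd r)
  have hntk : Nontrivial (Fin k) := ⟨⟨0, by omega⟩, ⟨1, by omega⟩, by simp [Fin.ext_iff]⟩
  have hNk : 2 ≤ ∑ r, (d r - 1) := by
    calc 2 ≤ k := hk
    _ = ∑ _r : Fin k, 1 := by simp
    _ ≤ ∑ r, (d r - 1) := Finset.sum_le_sum fun r _ => by have := hd r; omega
  have hSle : ∀ i : ∀ r, Fin (d r), (∑ r, ((i r : ℕ))) ≤ ∑ r, (d r - 1) :=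
    fun i => Finset.sum_le_sum fun r _ => by have := (i r).isLt; omega
  have hSistar : (∑ r, ((istar r : ℕ))) = ∑ r, (d r - 1) :=
    Finset.sum_congr rfl fun r _ => histar r
  -- applications
  have huapp : ∀ n (i : ∀ r, Fin (d r)),
      u n i = if (∑ r, ((i r : ℕ))) = n then 1 else 0 := by
    intro n i
    have h1 : u n i = ∑ j ∈ Finset.univ.filter
        (fun j : ∀ r, Fin (d r) => (∑ r, ((j r : ℕ))) = n),
        (EuclideanSpace.single j (1 : ℂ)) i := by
      rw [hu, WithLp.ofLp_sum]; exact Finset.sum_apply i _ _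
    rw [h1]
    simp only [EuclideanSpace.single_apply]
    rw [Finset.sum_ite_eq]
    simp [Finset.mem_filter]
  have hvapp : ∀ (lam : ℂ) (i : ∀ r, Fin (d r)),
      v lam i = lam ^ (∑ r, ((i r : ℕ))) := by
    intro lam i
    have h1 : v lam i = ∑ j : ∀ r, Fin (d r),
        (lam ^ (∑ r, ((j r : ℕ))) • EuclideanSpace.single j (1 : ℂ)) i := by
      rw [hv, WithLp.ofLp_sum]; exact Finset.sum_apply i _ _
    rw [h1]
    simp only [PiLp.smul_apply, EuclideanSpace.single_apply, smul_eq_mul, mul_ite,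
      mul_one, mul_zero]
    rw [Finset.sum_ite_eq]
    simp
  have hsingleapp : ∀ i : ∀ r, Fin (d r),
      (EuclideanSpace.single istar (1 : ℂ)) i = if i = istar then 1 else 0 := by
    intro i; rw [EuclideanSpace.single_apply]
  -- constancy on level sets
  have hwc : ∀ i i' : ∀ r, Fin (d r),
      (∑ r, ((i r : ℕ))) = (∑ r, ((i' r : ℕ))) → w i = w i' := by
    let M : Submodule ℂ (EuclideanSpace ℂ (∀ r, Fin (d r))) :=
      { carrier := {f | ∀ i i' : ∀ r, Fin (d r),
          (∑ r, ((i r : ℕ))) = (∑ r, ((i' r : ℕ))) → f i = f i'}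
        add_mem' := by
          intro f g hf hg i i' h
          show f i + g i = f i' + g i'
          rw [hf i i' h, hg i i' h]
        zero_mem' := fun _ _ _ => rfl
        smul_mem' := by
          intro c f hf i i' h
          show c * f i = c * f i'
          rw [hf i i' h] }
    have hwM : w ∈ M := by
      apply Submodule.span_le.mpr _ hwT
      rintro _ ⟨n, _, rfl⟩
      intro i i' h
      rw [huapp, huapp, h]
    exact hwM
  constructor
  · rintro ⟨x, hx⟩
    obtain ⟨dec, hdec⟩ : ∃ f : ℕ → (∀ r, Fin (d r)),
        ∀ n, n ≤ ∑ r, (d r - 1) → (∑ r, (((f n) r : ℕ))) = n := by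
      choose f hf using aux_exists_decomp (d := d) hd1
      exact ⟨fun n => if hn : n ≤ ∑ r, (d r - 1) then f n hn else (fun r => ⟨0, hd1 r⟩),
        fun n hn => by simp only [dif_pos hn]; exact hf n hn⟩
    set a : ℕ → ℂ := fun n => w (dec n) with ha
    have hwa : ∀ i : ∀ r, Fin (d r), w i = a (∑ r, ((i r : ℕ))) := fun i =>
      hwc i (dec _) (hdec _ (hSle i)).symm
    have hax : ∀ i : ∀ r, Fin (d r), a (∑ r, ((i r : ℕ))) = ∏ r, x r (i r) := fun i => by
      rw [← hwa i]; exact hx i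
    by_cases hmid : ∃ n, 1 ≤ n ∧ n + 1 ≤ ∑ r, (d r - 1) ∧ a n ≠ 0
    · -- full support: geometric, w = a 0 • v lam
      obtain ⟨n0, hn01, hn0N, hn0⟩ := hmid
      have hupAll : ∀ m, n0 ≤ m → m ≤ ∑ r, (d r - 1) → a m ≠ 0 := by
        intro m
        induction m with
        | zero => intro h1 _; omega
        | succ m ih =>
          intro h1 h2
          rcases Nat.lt_or_ge n0 (m + 1) with hc | hc
          · exact (aux_step hk hd x a hax m (by omega) (by omega)
              (ih (by omega) (by omega))).1
          · have hEq : n0 = m + 1 := by omega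
            rwa [← hEq]
      have hdownAll : ∀ j, a (n0 - j) ≠ 0 := by
        intro j
        induction j with
        | zero => simpa using hn0
        | succ j ih =>
          by_cases hz : n0 - j = 0
          · have hEq : n0 - (j + 1) = n0 - j := by omega
            rw [hEq]; exact ih
          · have h := (aux_step hk hd x a hax (n0 - j) (by omega) (by omega) ih).2
            have hEq : n0 - (j + 1) = (n0 - j) - 1 := by omega
            rwa [hEq]
      have hAll : ∀ m, m ≤ ∑ r, (d r - 1) → a m ≠ 0 := by
        intro m hm
        rcases le_or_gt n0 m with h | h
        · exact hupAll m h hm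
        · have h2 := hdownAll (n0 - m)
          rwa [show n0 - (n0 - m) = m by omega] at h2
      have ha0 : a 0 ≠ 0 := hAll 0 (by omega)
      have ha1 : a 1 ≠ 0 := hAll 1 (by omega)
      set lam : ℂ := a 1 / a 0 with hlam
      have hlamne : lam ≠ 0 := div_ne_zero ha1 ha0
      have hpow : ∀ m, m ≤ ∑ r, (d r - 1) → a m = a 0 * lam ^ m := by
        intro m
        induction m using Nat.strong_induction_on with
        | _ m ih =>
          match m with
          | 0 => intro _; simp
          | 1 => intro _; rw [hlam]; field_simp
          | (m + 2) =>
            intro hm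
            have h1 := ih (m + 1) (by omega) (by omega)
            have h0 := ih m (by omega) (by omega)
            have hg := aux_geo hk hd x a hax m hm (hAll (m + 1) (by omega))
            have hkey : a (m + 2) * (a 0 * lam ^ m)
                = (a 0 * lam ^ (m + 1)) * (a 0 * lam ^ (m + 1)) := by
              rw [← h0, ← h1, hg]
            have hne : a 0 * lam ^ m ≠ 0 := mul_ne_zero ha0 (pow_ne_zero _ hlamne)
            apply mul_right_cancel₀ hne
            rw [hkey]; ring
      left
      refine ⟨a 0, ha0, lam, ?_⟩
      ext i
      have h1 : (a 0 • v lam) i = a 0 * v lam i := rfl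
      rw [hwa i, hpow _ (hSle i), h1, hvapp]
    · push_neg at hmid
      have hker : ∃ i, w i ≠ 0 := by
        by_contra hcon
        push_neg at hcon
        exact hw0 (by ext i; exact hcon i)
      obtain ⟨i0, hi0⟩ := hker
      have hai0 : a (∑ r, ((i0 r : ℕ))) ≠ 0 := by rw [← hwa]; exact hi0
      have hle0 := hSle i0
      have hn1 : (∑ r, ((i0 r : ℕ))) = 0 ∨ (∑ r, ((i0 r : ℕ))) = ∑ r, (d r - 1) := by
        by_contra hcon
        push_neg at hcon
        exact hai0 (hmid _ (by omega) (by omega))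
      by_cases ha0 : a 0 = 0
      · -- w = a N • e_istar
        have haN : a (∑ r, (d r - 1)) ≠ 0 := by
          rcases hn1 with h | h
          · rw [h] at hai0; exact absurd ha0 hai0
          · rwa [h] at hai0
        right
        refine ⟨a (∑ r, (d r - 1)), haN, ?_⟩
        ext i
        have h1 : (a (∑ r, (d r - 1)) • EuclideanSpace.single istar (1 : ℂ)) i
            = a (∑ r, (d r - 1)) * (if i = istar then 1 else 0) := by
          rw [← hsingleapp i]; rfl
        rw [hwa i, h1]
        by_cases hii : i = istar
        · subst hii
          rw [hSistar, if_pos rfl, mul_one]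
        · obtain ⟨r, hr⟩ : ∃ r, i r ≠ istar r := by
            by_contra hc; push_neg at hc; exact hii (funext hc)
          have hlt : (∑ r, ((i r : ℕ))) < ∑ r, (d r - 1) := by
            apply Finset.sum_lt_sum (fun s _ => by have := (i s).isLt; omega)
            refine ⟨r, Finset.mem_univ r, ?_⟩
            have h2 := (i r).isLt
            have h3 : (i r : ℕ) ≠ (istar r : ℕ) := fun hE => hr (Fin.ext hE)
            have h4 := histar r
            omega
          have hz : a (∑ r, ((i r : ℕ))) = 0 := by
            by_cases h0' : (∑ r, ((i r : ℕ))) = 0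
            · rw [h0']; exact ha0
            · exact hmid _ (by omega) (by omega)
          rw [hz, if_neg hii, mul_zero]
      · -- a 0 ≠ 0, show a N = 0 and everything else in middle 0; w = a 0 • v 0
        have haN : a (∑ r, (d r - 1)) = 0 := by
          by_contra haN
          set r0 : Fin k := ⟨0, by omega⟩ with hr0
          have hmidval : a (d r0 - 1) ≠ 0 := aux_end hk hd x a hax r0 ha0 haN
          have hb1 : 1 ≤ d r0 - 1 := by have := hd r0; omega
          have hb2 : d r0 - 1 + 1 ≤ ∑ r, (d r - 1) := by
            obtain ⟨s1, hs1⟩ := exists_ne r0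
            have hsum : (d r0 - 1) + ∑ r ∈ Finset.univ.erase r0, (d r - 1)
                = ∑ r, (d r - 1) :=
              Finset.add_sum_erase Finset.univ (fun r => d r - 1) (Finset.mem_univ r0)
            have h2 : d s1 - 1 ≤ ∑ r ∈ Finset.univ.erase r0, (d r - 1) :=
              Finset.single_le_sum (f := fun r => d r - 1) (fun r _ => Nat.zero_le _)
                (Finset.mem_erase.mpr ⟨hs1, Finset.mem_univ s1⟩)
            have := hd s1
            omega
          exact hmidval (hmid _ hb1 hb2)
        left
        refine ⟨a 0, ha0, 0, ?_⟩
        ext i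
        have h1 : (a 0 • v 0) i = a 0 * (0 : ℂ) ^ (∑ r, ((i r : ℕ))) := by
          have h2 : (a 0 • v 0) i = a 0 * v 0 i := rfl
          rw [h2, hvapp]
        rw [hwa i, h1]
        by_cases h0' : (∑ r, ((i r : ℕ))) = 0
        · rw [h0']; simp
        · have hz : a (∑ r, ((i r : ℕ))) = 0 := by
            by_cases hNe : (∑ r, ((i r : ℕ))) = ∑ r, (d r - 1)
            · rw [hNe]; exact haN
            · have := hSle i; exact hmid _ (by omega) (by omega)
          rw [hz, zero_pow h0', mul_zero]
  · rintro (⟨c, hc, lam, rfl⟩ | ⟨c, hc, rfl⟩)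
    · refine ⟨fun r j => (if r = (⟨0, by omega⟩ : Fin k) then c else 1) * lam ^ (j : ℕ),
        fun i => ?_⟩
      have h1 : (c • v lam) i = c * lam ^ (∑ r, ((i r : ℕ))) := by
        have h2 : (c • v lam) i = c * v lam i := rfl
        rw [h2, hvapp]
      rw [h1, Finset.prod_mul_distrib]
      congr 1
      · rw [Finset.prod_ite_eq' Finset.univ (⟨0, by omega⟩ : Fin k) (fun _ => c)]
        simp
      · exact (Finset.prod_pow_eq_pow_sum _ _ _).symm
    · refine ⟨fun r j => if j = istar r then
          (if r = (⟨0, by omega⟩ : Fin k) then c else 1) else 0, fun i => ?_⟩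
      have h1 : (c • EuclideanSpace.single istar (1 : ℂ)) i
          = c * (if i = istar then 1 else 0) := by
        have h2 : (c • EuclideanSpace.single istar (1 : ℂ)) i
            = c * (EuclideanSpace.single istar (1 : ℂ)) i := rfl
        rw [h2, hsingleapp]
      rw [h1]
      by_cases hii : i = istar
      · rw [hii, if_pos rfl, mul_one]
        have hcongr : (∏ r, (fun (r : Fin k) (j : Fin (d r)) => if j = istar r then
            (if r = (⟨0, by omega⟩ : Fin k) then c else 1) else 0) r (istar r))
            = ∏ r, (if r = (⟨0, by omega⟩ : Fin k) then c else 1) :=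
          Finset.prod_congr rfl fun r _ => by simp
        rw [hcongr, Finset.prod_ite_eq' Finset.univ (⟨0, by omega⟩ : Fin k) (fun _ => c)]
        simp
      · obtain ⟨r, hr⟩ : ∃ r, i r ≠ istar r := by
          by_contra hc2; push_neg at hc2; exact hii (funext hc2)
        rw [if_neg hii, mul_zero]
        exact (Finset.prod_eq_zero (Finset.mem_univ r) (by simp only [if_neg hr])).symm
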